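/- Let H be a complex Hilbert space and let A : D(A) ⊆ H → H be a densely defined linear operator. Let P, S ∈ ℒ(H) with P self-adjoint, suppose Sx ∈ D(A) for every x ∈ H and T ∈ ℒ(H) satisfies Tx = A(Sx) for all x ∈ H, and suppose there is a constant C ≥ 0 such that |⟨Px, Ay⟩ + ⟨Ax, Py⟩| ≤ C‖x‖‖y‖ for all x, y ∈ D(A). Then for all x, y ∈ D(A), |⟨PSPx, Ay⟩ + ⟨Ax, PSPy⟩| ≤ (2C‖S‖‖P‖ + ‖T + T*‖‖P‖²)‖x‖‖y‖. (In the notation of the paper: if P ∈ D(𝒜) and AS is bounded, then PSP ∈ D(𝒜).) -/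

import Mathlib

open scoped InnerProductSpace

/-- Let `A : D(A) ⊆ H → H` be densely defined, `P ∈ ℒ(H)` self-adjoint,
`S ∈ ℒ(H)` with `Sx ∈ D(A)` for all `x` and `T ∈ ℒ(H)` the bounded extension of `AS`
(`Tx = A(Sx)`). If `|⟨Px, Ay⟩ + ⟨Ax, Py⟩| ≤ C‖x‖‖y‖` on `D(A) × D(A)` for some `C ≥ 0`, then
`|⟨PSPx, Ay⟩ + ⟨Ax, PSPy⟩| ≤ (2C‖S‖‖P‖ + ‖T + T*‖‖P‖²)‖x‖‖y‖` on `D(A) × D(A)`.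
(If `P ∈ D(𝒜)` and `AS` is bounded, then `PSP ∈ D(𝒜)`.) -/
theorem stmt_14 {H : Type*} [NormedAddCommGroup H] [InnerProductSpace ℂ H] [CompleteSpace H]
    (D : Submodule ℂ H) (hD : Dense (D : Set H)) (A : D →ₗ[ℂ] H)
    (P S : H →L[ℂ] H) (hPsa : IsSelfAdjoint P)
    (hSD : ∀ x : H, S x ∈ D) (T : H →L[ℂ] H) (hT : ∀ x : H, T x = A ⟨S x, hSD x⟩)
    (C : ℝ) (hC0 : 0 ≤ C)
    (hC : ∀ x y : D, ‖⟪P (x : H), A y⟫_ℂ + ⟪A x, P (y : H)⟫_ℂ‖ ≤ C * ‖(x : H)‖ * ‖(y : H)‖) :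
    ∀ x y : D,
      ‖⟪P (S (P (x : H))), A y⟫_ℂ + ⟪A x, P (S (P (y : H)))⟫_ℂ‖
        ≤ (2 * C * ‖S‖ * ‖P‖ + ‖T + ContinuousLinearMap.adjoint T‖ * ‖P‖ ^ 2)
            * ‖(x : H)‖ * ‖(y : H)‖ := by
  intro x y
  set Q := ContinuousLinearMap.adjoint T with hQ
  set x' : D := ⟨S (P (x : H)), hSD _⟩ with hx'
  set y' : D := ⟨S (P (y : H)), hSD _⟩ with hy'
  have hAx' : A x' = T (P (x : H)) := (hT _).symm
  have hAy' : A y' = T (P (y : H)) := (hT _).symm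
  have key : ⟪P (S (P (x : H))), A y⟫_ℂ + ⟪A x, P (S (P (y : H)))⟫_ℂ
      = (⟪P (x' : H), A y⟫_ℂ + ⟪A x', P (y : H)⟫_ℂ)
        + (⟪P (x : H), A y'⟫_ℂ + ⟪A x, P (y' : H)⟫_ℂ)
        - ⟪(T + Q) (P (x : H)), P (y : H)⟫_ℂ := by
    have h1 : ⟪(T + Q) (P (x : H)), P (y : H)⟫_ℂ
        = ⟪A x', P (y : H)⟫_ℂ + ⟪P (x : H), A y'⟫_ℂ := by
      rw [hAx', hAy', hQ]
      simp [inner_add_left, ContinuousLinearMap.adjoint_inner_left]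
    rw [h1]
    ring_nf
    rfl
  rw [key]
  have hx'n : ‖(x' : H)‖ ≤ ‖S‖ * (‖P‖ * ‖(x : H)‖) := by
    calc ‖S (P (x : H))‖ ≤ ‖S‖ * ‖P (x : H)‖ := S.le_opNorm _
      _ ≤ ‖S‖ * (‖P‖ * ‖(x : H)‖) :=
        mul_le_mul_of_nonneg_left (P.le_opNorm _) (norm_nonneg S)
  have hy'n : ‖(y' : H)‖ ≤ ‖S‖ * (‖P‖ * ‖(y : H)‖) := by
    calc ‖S (P (y : H))‖ ≤ ‖S‖ * ‖P (y : H)‖ := S.le_opNorm _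
      _ ≤ ‖S‖ * (‖P‖ * ‖(y : H)‖) :=
        mul_le_mul_of_nonneg_left (P.le_opNorm _) (norm_nonneg S)
  have b1 : ‖⟪P (x' : H), A y⟫_ℂ + ⟪A x', P (y : H)⟫_ℂ‖
      ≤ C * (‖S‖ * (‖P‖ * ‖(x : H)‖)) * ‖(y : H)‖ := by
    refine (hC x' y).trans ?_
    have : C * ‖(x' : H)‖ ≤ C * (‖S‖ * (‖P‖ * ‖(x : H)‖)) :=
      mul_le_mul_of_nonneg_left hx'n hC0
    exact mul_le_mul_of_nonneg_right this (norm_nonneg _)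
  have b2 : ‖⟪P (x : H), A y'⟫_ℂ + ⟪A x, P (y' : H)⟫_ℂ‖
      ≤ C * ‖(x : H)‖ * (‖S‖ * (‖P‖ * ‖(y : H)‖)) := by
    refine (hC x y').trans ?_
    exact mul_le_mul_of_nonneg_left hy'n (mul_nonneg hC0 (norm_nonneg _))
  have b3 : ‖⟪(T + Q) (P (x : H)), P (y : H)⟫_ℂ‖
      ≤ ‖T + Q‖ * (‖P‖ * ‖(x : H)‖) * (‖P‖ * ‖(y : H)‖) := by
    calc ‖⟪(T + Q) (P (x : H)), P (y : H)⟫_ℂ‖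
        ≤ ‖(T + Q) (P (x : H))‖ * ‖P (y : H)‖ := norm_inner_le_norm _ _
      _ ≤ (‖T + Q‖ * ‖P (x : H)‖) * ‖P (y : H)‖ :=
        mul_le_mul_of_nonneg_right ((T + Q).le_opNorm _) (norm_nonneg _)
      _ ≤ ‖T + Q‖ * (‖P‖ * ‖(x : H)‖) * (‖P‖ * ‖(y : H)‖) := by
        have h1 : ‖P (x : H)‖ ≤ ‖P‖ * ‖(x : H)‖ := P.le_opNorm _
        have h2 : ‖P (y : H)‖ ≤ ‖P‖ * ‖(y : H)‖ := P.le_opNorm _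
        have := mul_le_mul (mul_le_mul_of_nonneg_left h1 (norm_nonneg (T + Q))) h2
          (norm_nonneg _) (by positivity)
        linarith
  calc ‖(⟪P (x' : H), A y⟫_ℂ + ⟪A x', P (y : H)⟫_ℂ)
        + (⟪P (x : H), A y'⟫_ℂ + ⟪A x, P (y' : H)⟫_ℂ)
        - ⟪(T + Q) (P (x : H)), P (y : H)⟫_ℂ‖
      ≤ ‖⟪P (x' : H), A y⟫_ℂ + ⟪A x', P (y : H)⟫_ℂ‖
        + ‖⟪P (x : H), A y'⟫_ℂ + ⟪A x, P (y' : H)⟫_ℂ‖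
        + ‖⟪(T + Q) (P (x : H)), P (y : H)⟫_ℂ‖ :=
      (norm_sub_le _ _).trans (by gcongr; exact norm_add_le _ _)
    _ ≤ C * (‖S‖ * (‖P‖ * ‖(x : H)‖)) * ‖(y : H)‖
        + C * ‖(x : H)‖ * (‖S‖ * (‖P‖ * ‖(y : H)‖))
        + ‖T + Q‖ * (‖P‖ * ‖(x : H)‖) * (‖P‖ * ‖(y : H)‖) := by
      exact add_le_add (add_le_add b1 b2) b3
    _ = (2 * C * ‖S‖ * ‖P‖ + ‖T + Q‖ * ‖P‖ ^ 2) * ‖(x : H)‖ * ‖(y : H)‖ := by ring
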